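/- Let f be a monic irreducible polynomial of degree 2n over F_q and α ∈ F_{q^{2n}} a root of f. The number of pairs (v_1, v_2) ∈ F_{q^{2n}}^2 such that (v_1, v_2, αv_1, αv_2, ..., α^{n-1}v_1, α^{n-1}v_2) is an F_q-basis of F_{q^{2n}} equals q^{2n-1}(q-1)(q^{2n}-1). -/

import Mathlib

open Polynomial Finset

section Aux
variable {F K : Type*} [Field F] [Field K] [Algebra F K]

noncomputable def Wm (F : Type*) [Field F] [Field K] [Algebra F K] (α : K) (m : ℕ) :
    Submodule F K := (Polynomial.degreeLT F m).map (Polynomial.aeval α).toLinearMap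

lemma mem_Wm {α : K} {m : ℕ} {w : K} :
    w ∈ Wm F α m ↔ ∃ p : F[X], p.degree < (m : ℕ) ∧ aeval α p = w := by
  simp [Wm, Polynomial.mem_degreeLT]

variable [Fintype F]

lemma card_degreeLT (m : ℕ) :
    Nat.card (Polynomial.degreeLT F m) = Fintype.card F ^ m := by
  rw [Nat.card_congr (Polynomial.degreeLTEquiv F m).toEquiv]
  simp [Nat.card_eq_fintype_card]

lemma deg_helper {p r : F[X]} {mp dr N : ℕ} (hp : p.degree < (mp : ℕ))
    (hr : r.natDegree ≤ dr) (hN : mp + dr ≤ N) : (p * r).degree < (N : ℕ) := by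
  rcases eq_or_ne p 0 with rfl | hp0
  · rw [zero_mul, Polynomial.degree_zero]; exact WithBot.bot_lt_coe _
  rcases eq_or_ne r 0 with rfl | hr0
  · rw [mul_zero, Polynomial.degree_zero]; exact WithBot.bot_lt_coe _
  have h1 : p.natDegree < mp := (Polynomial.natDegree_lt_iff_degree_lt hp0).2 hp
  rw [Polynomial.degree_mul, Polynomial.degree_eq_natDegree hp0,
    Polynomial.degree_eq_natDegree hr0]
  exact_mod_cast (by omega : p.natDegree + r.natDegree < N)

lemma aeval_inj_of {α : K} {N : ℕ}
    (H : ∀ p : F[X], p.degree < (N : ℕ) → aeval α p = 0 → p = 0)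
    {p r : F[X]} (hd : (p - r).degree < (N : ℕ)) (h : aeval α p = aeval α r) : p = r := by
  have := H (p - r) hd (by rw [map_sub, h, sub_self])
  exact sub_eq_zero.mp this

lemma card_V_of_rep {α : K} {N : ℕ}
    (H : ∀ p : F[X], p.degree < (N : ℕ) → aeval α p = 0 → p = 0)
    {u : K} {a b : F[X]} (ha : a ≠ 0) (hb : b ≠ 0)
    (hcop : IsCoprime a b) (hu : u * aeval α b = aeval α a)
    {m : ℕ} (hma : a.natDegree + m ≤ N) (hmb : b.natDegree + m ≤ N) :
    Nat.card {w : K // w ∈ Wm F α m ∧ u * w ∈ Wm F α m}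
      = Fintype.card F ^ (m - max a.natDegree b.natDegree) := by
  classical
  set M := max a.natDegree b.natDegree with hM
  rw [← card_degreeLT (F := F) (m - M)]
  symm
  apply Nat.card_congr
  have hdm : ∀ c : F[X], c.degree < ((m - M : ℕ) : ℕ) → ∀ p : F[X], p ≠ 0 →
      p.natDegree ≤ M → (p * c).degree < (m : ℕ) := by
    intro c hc p hp0 hpM
    rcases eq_or_ne c 0 with rfl | hc0
    · rw [mul_zero, Polynomial.degree_zero]; exact WithBot.bot_lt_coe _
    have hcd : c.natDegree < m - M := (Polynomial.natDegree_lt_iff_degree_lt hc0).2 hc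
    have hMm : M < m := by omega
    rw [mul_comm]
    exact deg_helper hc hpM (by omega)
  have hwd : ∀ c : F[X], c ∈ degreeLT F (m - M) →
      (aeval α (b * c) ∈ Wm F α m ∧ u * aeval α (b * c) ∈ Wm F α m) := by
    intro c hc
    rw [Polynomial.mem_degreeLT] at hc
    constructor
    · exact mem_Wm.2 ⟨b * c, hdm c hc b hb (le_max_right _ _), rfl⟩
    · have heq : u * aeval α (b * c) = aeval α (a * c) := by
        rw [map_mul, map_mul, ← mul_assoc, hu]
      rw [heq]
      exact mem_Wm.2 ⟨a * c, hdm c hc a ha (le_max_left _ _), rfl⟩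
  refine Equiv.ofBijective (fun c => ⟨aeval α (b * c.1), hwd c.1 c.2⟩) ⟨?_, ?_⟩
  · rintro ⟨c, hc⟩ ⟨c', hc'⟩ h
    simp only [Subtype.mk.injEq] at h ⊢
    rw [Polynomial.mem_degreeLT] at hc hc'
    have hbc : b * c = b * c' := by
      apply aeval_inj_of H _ h
      have : b * c - b * c' = (c - c') * b := by ring
      rw [this]
      refine deg_helper (mp := m - M)
        (lt_of_le_of_lt (Polynomial.degree_sub_le _ _) (max_lt hc hc')) le_rfl (by omega)
    exact mul_left_cancel₀ hb hbc
  · rintro ⟨w, hw, huw⟩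
    obtain ⟨b', hb'd, rfl⟩ := mem_Wm.1 hw
    obtain ⟨a', ha'd, ha'eq⟩ := mem_Wm.1 huw
    have key : a' * b = b' * a := by
      apply aeval_inj_of H
      · refine lt_of_le_of_lt (Polynomial.degree_sub_le _ _) (max_lt ?_ ?_)
        · exact deg_helper ha'd (le_refl b.natDegree) (by omega)
        · exact deg_helper hb'd (le_refl a.natDegree) (by omega)
      · rw [map_mul, map_mul, ha'eq, mul_comm u _, mul_assoc, hu]
    have hdvd : b ∣ b' := by
      refine hcop.symm.dvd_of_dvd_mul_right ⟨a', ?_⟩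
      rw [← key]; ring
    obtain ⟨c, rfl⟩ := hdvd
    have ha' : a' = a * c := by
      have hba : b * a' = b * (a * c) := by linear_combination key
      exact mul_left_cancel₀ hb hba
    have hcmem : c ∈ degreeLT F (m - M) := by
      rw [Polynomial.mem_degreeLT]
      rcases eq_or_ne c 0 with rfl | hc0
      · rw [Polynomial.degree_zero]; exact WithBot.bot_lt_coe _
      have hbc0 : b * c ≠ 0 := mul_ne_zero hb hc0
      have ha'0 : a' ≠ 0 := by rw [ha']; exact mul_ne_zero ha hc0
      have h1 : (b * c).natDegree < m := (Polynomial.natDegree_lt_iff_degree_lt hbc0).2 hb'd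
      have h2 : a'.natDegree < m := (Polynomial.natDegree_lt_iff_degree_lt ha'0).2 ha'd
      rw [Polynomial.natDegree_mul hb hc0] at h1
      rw [ha', Polynomial.natDegree_mul ha hc0] at h2
      have : c.natDegree < m - M := by omega
      exact (Polynomial.natDegree_lt_iff_degree_lt hc0).1 this
    exact ⟨⟨c, hcmem⟩, rfl⟩


lemma card_Wm {α : K} {N m : ℕ}
    (H : ∀ p : F[X], p.degree < (N : ℕ) → aeval α p = 0 → p = 0) (hm : m ≤ N) :
    Nat.card (Wm F α m) = Fintype.card F ^ m := by
  rw [← card_degreeLT (F := F) m]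
  apply Nat.card_congr
  refine Equiv.symm (Equiv.ofBijective (fun p => ⟨aeval α p.1, mem_Wm.2 ⟨p.1, Polynomial.mem_degreeLT.1 p.2, rfl⟩⟩) ⟨?_, ?_⟩)
  · rintro ⟨p, hp⟩ ⟨p', hp'⟩ h
    simp only [Subtype.mk.injEq] at h ⊢
    have : aeval α (p - p') = 0 := by simp [map_sub, h]
    have hd : (p - p').degree < (N : ℕ) := by
      rw [Polynomial.mem_degreeLT] at hp hp'
      exact lt_of_lt_of_le (lt_of_le_of_lt (Polynomial.degree_sub_le _ _) (max_lt hp hp'))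
        (by exact_mod_cast Nat.cast_le.2 hm)
    have := H _ hd this
    exact sub_eq_zero.mp this
  · rintro ⟨w, hw⟩
    obtain ⟨p, hp, rfl⟩ := mem_Wm.1 hw
    exact ⟨⟨p, Polynomial.mem_degreeLT.2 hp⟩, rfl⟩


lemma star {α : K} [Fintype K] {N m : ℕ}
    (H : ∀ p : F[X], p.degree < (N : ℕ) → aeval α p = 0 → p = 0) (hm : m ≤ N) :
    ∑ u : K, Nat.card {w : K // w ∈ Wm F α m ∧ u * w ∈ Wm F α m} + Fintype.card F ^ m
      = Fintype.card F ^ m * Fintype.card F ^ m + Fintype.card K := by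
  classical
  set q := Fintype.card F with hq
  have key : ∀ w : K, (Finset.univ.filter fun u : K => w ∈ Wm F α m ∧ u * w ∈ Wm F α m).card
      = if w = 0 then Fintype.card K else if w ∈ Wm F α m then q ^ m else 0 := by
    intro w
    by_cases h0 : w = 0
    · subst h0
      simp [Submodule.zero_mem]
    · rw [if_neg h0]
      by_cases hw : w ∈ Wm F α m
      · rw [if_pos hw]
        have : (Finset.univ.filter fun u : K => w ∈ Wm F α m ∧ u * w ∈ Wm F α m)
            = Finset.univ.filter fun u : K => u * w ∈ Wm F α m := by
          apply Finset.filter_congr; intro u _; simp [hw]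
        rw [this, ← card_Wm (α := α) H hm, Nat.card_eq_fintype_card,
          ← Fintype.card_subtype]
        apply Fintype.card_congr
        exact { toFun := fun u => ⟨u.1 * w, u.2⟩
                invFun := fun x => ⟨x.1 * w⁻¹, by
                  have := x.2; field_simp; exact this⟩
                left_inv := fun u => by
                  ext; field_simp
                right_inv := fun x => by
                  ext; field_simp }
      · rw [if_neg hw]
        simp [Finset.filter_eq_empty_iff, hw]
  have swap : ∑ u : K, Nat.card {w : K // w ∈ Wm F α m ∧ u * w ∈ Wm F α m}
      = ∑ w : K, (Finset.univ.filter fun u : K => w ∈ Wm F α m ∧ u * w ∈ Wm F α m).card := by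
    have : ∀ u : K, Nat.card {w : K // w ∈ Wm F α m ∧ u * w ∈ Wm F α m}
        = (Finset.univ.filter fun w : K => w ∈ Wm F α m ∧ u * w ∈ Wm F α m).card := by
      intro u; rw [Nat.card_eq_fintype_card, Fintype.card_subtype]
    simp only [this, Finset.card_filter]
    exact Finset.sum_comm
  rw [swap]
  simp only [key]
  rw [← Finset.add_sum_erase _ _ (Finset.mem_univ (0 : K))]
  rw [if_pos rfl]
  have h2 : ∑ x ∈ Finset.univ.erase (0 : K),
      (if x = 0 then Fintype.card K else if x ∈ Wm F α m then q ^ m else 0)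
      = ∑ x ∈ Finset.univ.erase (0 : K), (if x ∈ Wm F α m then q ^ m else 0) := by
    apply Finset.sum_congr rfl
    intro x hx
    rw [if_neg (Finset.ne_of_mem_erase hx)]
  rw [h2, ← Finset.sum_filter, Finset.sum_const, Finset.filter_erase,
    Finset.card_erase_of_mem (by simp [Submodule.zero_mem] : (0:K) ∈ Finset.univ.filter (· ∈ Wm F α m))]
  have h3 : (Finset.univ.filter (· ∈ Wm F α m)).card = q ^ m := by
    rw [← card_Wm (α := α) H hm, Nat.card_eq_fintype_card, Fintype.card_subtype]
  rw [h3, smul_eq_mul, Nat.sub_mul, one_mul]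
  have he : 1 ≤ q ^ m := Nat.one_le_pow _ _ Fintype.card_pos
  have hle : q ^ m ≤ q ^ m * q ^ m := Nat.le_mul_of_pos_left _ (by omega)
  generalize hgen : q ^ m * q ^ m = ee at *
  omega


lemma Wm_mono {α : K} {m m' : ℕ} (h : m ≤ m') : Wm F α m ≤ Wm F α m' := by
  intro w hw
  obtain ⟨p, hp, rfl⟩ := mem_Wm.1 hw
  exact mem_Wm.2 ⟨p, lt_of_lt_of_le hp (by exact_mod_cast h), rfl⟩

lemma per_u {α : K} {n N : ℕ}
    (H : ∀ p : F[X], p.degree < (N : ℕ) → aeval α p = 0 → p = 0)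
    (hn : 1 ≤ n) (hN : 2 * n ≤ N) (u : K)
    (hex : ∃ w ∈ Wm F α n, w ≠ 0 ∧ u * w ∈ Wm F α n) :
    Nat.card {w : K // w ∈ Wm F α n ∧ u * w ∈ Wm F α n}
      = Fintype.card F * Nat.card {w : K // w ∈ Wm F α (n-1) ∧ u * w ∈ Wm F α (n-1)} := by
  obtain ⟨w₀, hw₀, hw0, huw₀⟩ := hex
  letI : DecidableEq F[X] := Classical.decEq _
  letI : GCDMonoid F[X] := EuclideanDomain.gcdMonoid _
  rcases eq_or_ne u 0 with rfl | hu0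
  · have hV : ∀ m : ℕ, Nat.card {w : K // w ∈ Wm F α m ∧ (0:K) * w ∈ Wm F α m}
        = Nat.card (Wm F α m) := by
      intro m
      apply Nat.card_congr
      apply Equiv.subtypeEquivRight
      intro w
      simp [Submodule.zero_mem]
    rw [hV, hV, card_Wm H (by omega), card_Wm H (by omega),
      show n = (n-1)+1 by omega, pow_succ', Nat.add_sub_cancel]
  · obtain ⟨b, hbdeg, hbα⟩ := mem_Wm.1 hw₀
    obtain ⟨a, hadeg, haα⟩ := mem_Wm.1 huw₀
    have hb0 : b ≠ 0 := fun h => hw0 (by rw [← hbα, h, map_zero])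
    have ha0 : a ≠ 0 := by
      intro h
      exact mul_ne_zero hu0 hw0 (by rw [← haα, h, map_zero])
    have hgne : GCDMonoid.gcd a b ≠ 0 := gcd_ne_zero_of_left ha0
    have hga : GCDMonoid.gcd a b * (a / GCDMonoid.gcd a b) = a :=
      EuclideanDomain.mul_div_cancel' hgne (gcd_dvd_left a b)
    have hgb : GCDMonoid.gcd a b * (b / GCDMonoid.gcd a b) = b :=
      EuclideanDomain.mul_div_cancel' hgne (gcd_dvd_right a b)
    set g := GCDMonoid.gcd a b with hg
    set a₀ := a / g with ha₀def
    set b₀ := b / g with hb₀def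
    have ha₀ : a₀ ≠ 0 := left_div_gcd_ne_zero ha0
    have hb₀ : b₀ ≠ 0 := right_div_gcd_ne_zero hb0
    have hcop : IsCoprime a₀ b₀ := isCoprime_div_gcd_div_gcd hb0
    have hnN : (n : WithBot ℕ) ≤ (N : ℕ) := by exact_mod_cast (by omega : n ≤ N)
    have hgα : aeval α g ≠ 0 := by
      intro h
      exact hgne (H g (lt_of_le_of_lt (Polynomial.degree_le_of_dvd (gcd_dvd_right a b) hb0)
        (lt_of_lt_of_le hbdeg hnN)) h)
    have hub : u * aeval α b = aeval α a := by rw [hbα, haα]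
    have hu' : u * aeval α b₀ = aeval α a₀ := by
      apply mul_left_cancel₀ hgα
      calc aeval α g * (u * aeval α b₀) = u * aeval α (g * b₀) := by rw [map_mul]; ring
        _ = u * aeval α b := by rw [hgb]
        _ = aeval α a := hub
        _ = aeval α g * aeval α a₀ := by rw [← map_mul, hga]
    have hda : a.natDegree ≤ n - 1 := by
      have := (Polynomial.natDegree_lt_iff_degree_lt ha0).2 hadeg
      omega
    have hdb : b.natDegree ≤ n - 1 := by
      have := (Polynomial.natDegree_lt_iff_degree_lt hb0).2 hbdeg
      omega
    have hda₀ : a₀.natDegree ≤ n - 1 := by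
      have := Polynomial.natDegree_mul hgne ha₀
      rw [hga] at this
      omega
    have hdb₀ : b₀.natDegree ≤ n - 1 := by
      have := Polynomial.natDegree_mul hgne hb₀
      rw [hgb] at this
      omega
    rw [card_V_of_rep H ha₀ hb₀ hcop hu' (by omega) (by omega),
      card_V_of_rep H ha₀ hb₀ hcop hu' (by omega) (by omega)]
    have hM : max a₀.natDegree b₀.natDegree ≤ n - 1 := by omega
    rw [show n - max a₀.natDegree b₀.natDegree = (n - 1 - max a₀.natDegree b₀.natDegree) + 1
      by omega, pow_succ']
lemma per_u_trivial {α : K} {n : ℕ} {u : K}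
    (hnot : ¬ ∃ w ∈ Wm F α n, w ≠ 0 ∧ u * w ∈ Wm F α n) {k : ℕ} (hk : k ≤ n) :
    Nat.card {w : K // w ∈ Wm F α k ∧ u * w ∈ Wm F α k} = 1 := by
  rw [Nat.card_eq_one_iff_unique]
  constructor
  · constructor
    rintro ⟨w, hw, huw⟩ ⟨w', hw', huw'⟩
    have h0 : ∀ x : K, x ∈ Wm F α k → u * x ∈ Wm F α k → x = 0 := by
      intro x hx hux
      by_contra hx0
      exact hnot ⟨x, Wm_mono hk hx, hx0, Wm_mono hk hux⟩
    simp only [Subtype.mk.injEq]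
    rw [h0 w hw huw, h0 w' hw' huw']
  · exact ⟨⟨0, Submodule.zero_mem _, by rw [mul_zero]; exact Submodule.zero_mem _⟩⟩

lemma card_T [Fintype K] {α : K} {n N : ℕ}
    (H : ∀ p : F[X], p.degree < (N : ℕ) → aeval α p = 0 → p = 0)
    (hn : 1 ≤ n) (hN : 2 * n ≤ N)
    (hK : Fintype.card K = Fintype.card F ^ (2 * n)) :
    Nat.card {u : K // ∃ w ∈ Wm F α n, w ≠ 0 ∧ u * w ∈ Wm F α n}
      = Fintype.card F ^ (2 * n - 1) := by
  classical
  set q := Fintype.card F with hqdef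
  set T := Finset.univ.filter
    (fun u : K => ∃ w ∈ Wm F α n, w ≠ 0 ∧ u * w ∈ Wm F α n) with hTdef
  have hs : Nat.card {u : K // ∃ w ∈ Wm F α n, w ≠ 0 ∧ u * w ∈ Wm F α n} = T.card := by
    rw [Nat.card_eq_fintype_card, Fintype.card_subtype]
  rw [hs]
  set cV : K → ℕ → ℕ := fun u m => Nat.card {w : K // w ∈ Wm F α m ∧ u * w ∈ Wm F α m}
    with hcVdef
  have hstar_n : (∑ u : K, cV u n) + q ^ n = q ^ n * q ^ n + Fintype.card K :=
    star H (by omega)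
  have hstar_n1 : (∑ u : K, cV u (n-1)) + q ^ (n-1) = q ^ (n-1) * q ^ (n-1) + Fintype.card K :=
    star H (by omega)
  set t := (Finset.univ.filter
    (fun u : K => ¬ ∃ w ∈ Wm F α n, w ≠ 0 ∧ u * w ∈ Wm F α n)).card with htdef
  have hsum_n : ∑ u : K, cV u n = q * ∑ u ∈ T, cV u (n-1) + t := by
    rw [← Finset.sum_filter_add_sum_filter_not Finset.univ
      (fun u : K => ∃ w ∈ Wm F α n, w ≠ 0 ∧ u * w ∈ Wm F α n) (fun u => cV u n)]
    congr 1
    · rw [Finset.mul_sum]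
      apply Finset.sum_congr rfl
      intro u hu
      exact per_u H hn hN u (by simpa using (Finset.mem_filter.1 hu).2)
    · rw [htdef, Finset.card_eq_sum_ones]
      apply Finset.sum_congr rfl
      intro u hu
      exact per_u_trivial (by simpa using (Finset.mem_filter.1 hu).2) le_rfl
  have hsum_n1 : ∑ u : K, cV u (n-1) = (∑ u ∈ T, cV u (n-1)) + t := by
    rw [← Finset.sum_filter_add_sum_filter_not Finset.univ
      (fun u : K => ∃ w ∈ Wm F α n, w ≠ 0 ∧ u * w ∈ Wm F α n) (fun u => cV u (n-1))]
    congr 1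
    rw [htdef, Finset.card_eq_sum_ones]
    apply Finset.sum_congr rfl
    intro u hu
    exact per_u_trivial (by simpa using (Finset.mem_filter.1 hu).2) (by omega)
  have hst : T.card + t = Fintype.card K := by
    rw [htdef, hTdef]
    rw [Finset.card_filter_add_card_filter_not]
    · exact Finset.card_univ
  -- arithmetic over ℤ
  have hq2 : 2 ≤ q := Fintype.one_lt_card
  set A := ∑ u ∈ T, cV u (n-1) with hA
  set x := q ^ (n-1) with hx
  have hqn : q ^ n = q * x := by rw [hx, ← pow_succ']; congr 1; omega
  have h2n : q ^ (2*n) = (q * x) * (q * x) := by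
    rw [hx, ← pow_succ', ← pow_add]; congr 1; omega
  have h2n1 : q ^ (2*n-1) = q * (x * x) := by
    rw [hx, ← pow_add, ← pow_succ']; congr 1; omega
  rw [hK, h2n] at hstar_n hstar_n1 hst
  rw [hqn] at hstar_n
  rw [hsum_n] at hstar_n
  rw [hsum_n1] at hstar_n1
  rw [h2n1]
  -- now pure arithmetic in ℕ with unknowns A, t, T.card, q, x
  have e1 : (q:ℤ) * A + t + q * x = (q*x)*(q*x) + (q*x)*(q*x) := by exact_mod_cast hstar_n
  have e2 : (A:ℤ) + t + x = x * x + (q*x)*(q*x) := by exact_mod_cast hstar_n1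
  have e3 : (T.card : ℤ) + t = (q*x)*(q*x) := by exact_mod_cast hst
  have hq1 : (q:ℤ) - 1 ≠ 0 := by
    have : (2:ℤ) ≤ q := by exact_mod_cast hq2
    omega
  have ht' : (t:ℤ) = (q-1) * (q * (x*x)) := by
    have hmul : ((q:ℤ)-1) * t = ((q:ℤ)-1) * ((q-1) * (q * (x*x))) := by
      linear_combination q * e2 - e1
    exact mul_left_cancel₀ hq1 hmul
  have : (T.card : ℤ) = q * (x * x) := by linear_combination e3 - ht'
  exact_mod_cast this
lemma natdeg_lt_of_deg_lt {p : F[X]} {n : ℕ} (h : p.degree < (n : ℕ)) (hn : 1 ≤ n) :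
    p.natDegree < n := by
  rcases eq_or_ne p 0 with rfl | hp
  · rw [Polynomial.natDegree_zero]; omega
  · exact (Polynomial.natDegree_lt_iff_degree_lt hp).2 h

noncomputable def polyOf {n : ℕ} (c : Fin n → F) : F[X] :=
  ∑ i : Fin n, Polynomial.monomial (i : ℕ) (c i)

lemma polyOf_degree {n : ℕ} (c : Fin n → F) : (polyOf c).degree < (n : ℕ) := by
  apply lt_of_le_of_lt (Polynomial.degree_sum_le _ _)
  refine (Finset.sup_lt_iff (WithBot.bot_lt_coe n)).2 ?_
  intro i _
  exact lt_of_le_of_lt (Polynomial.degree_monomial_le _ _) (WithBot.coe_lt_coe.2 i.2)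

lemma polyOf_coeff {n : ℕ} (c : Fin n → F) (j : Fin n) : (polyOf c).coeff (j : ℕ) = c j := by
  rw [polyOf, Polynomial.finset_sum_coeff]
  rw [Finset.sum_congr rfl (fun i _ => Polynomial.coeff_monomial)]
  rw [show (fun i : Fin n => if (i : ℕ) = (j : ℕ) then c i else 0)
    = fun i : Fin n => if i = j then c i else 0 by
      funext i; congr 1; simp [Fin.ext_iff]]
  · simpa using Finset.sum_ite_eq' Finset.univ j c

lemma aeval_polyOf {α : K} {n : ℕ} (c : Fin n → F) :
    aeval α (polyOf c) = ∑ i : Fin n, c i • α ^ (i : ℕ) := by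
  rw [polyOf, map_sum]
  apply Finset.sum_congr rfl
  intro i _
  rw [Polynomial.aeval_monomial, Algebra.smul_def]

lemma sum_split {α : K} {n : ℕ} (v : Fin 2 → K) (g : Fin n × Fin 2 → F) :
    ∑ p : Fin n × Fin 2, g p • (α ^ (p.1 : ℕ) * v p.2)
      = (∑ i : Fin n, g (i, 0) • α ^ (i : ℕ)) * v 0
        + (∑ i : Fin n, g (i, 1) • α ^ (i : ℕ)) * v 1 := by
  rw [Fintype.sum_prod_type]
  rw [Finset.sum_congr rfl (fun i _ => Fin.sum_univ_two (fun j => g (i, j) • (α ^ (i:ℕ) * v j)))]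
  rw [Finset.sum_add_distrib, Finset.sum_mul, Finset.sum_mul]
  congr 1
  · exact Finset.sum_congr rfl (fun i _ => (smul_mul_assoc _ _ _).symm)
  · exact Finset.sum_congr rfl (fun i _ => (smul_mul_assoc _ _ _).symm)

lemma aeval_eq_sum_fin {α : K} {n : ℕ} (hn : 1 ≤ n) {p : F[X]} (hp : p.degree < (n : ℕ)) :
    aeval α p = ∑ i : Fin n, p.coeff (i : ℕ) • α ^ (i : ℕ) := by
  rw [Polynomial.aeval_eq_sum_range' (natdeg_lt_of_deg_lt hp hn)]
  exact (Fin.sum_univ_eq_sum_range (fun i => p.coeff i • α ^ i) n).symm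

lemma indep_iff {α : K} {n N : ℕ}
    (H : ∀ p : F[X], p.degree < (N : ℕ) → aeval α p = 0 → p = 0)
    (hn : 1 ≤ n) (hN : n ≤ N) (v : Fin 2 → K) :
    LinearIndependent F (fun p : Fin n × Fin 2 => α ^ (p.1 : ℕ) * v p.2)
      ↔ (v 0 ≠ 0 ∧ ¬ ∃ w ∈ Wm F α n, w ≠ 0 ∧ (v 1 * (v 0)⁻¹) * w ∈ Wm F α n) := by
  have hNcast : (n : WithBot ℕ) ≤ (N : ℕ) := by exact_mod_cast hN
  rw [Fintype.linearIndependent_iff]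
  constructor
  · intro hli
    have hv0 : v 0 ≠ 0 := by
      intro hv
      have := hli (fun p => if p.2 = 0 then 1 else 0) (by
        apply Finset.sum_eq_zero
        intro p _
        split_ifs with h
        · rw [one_smul, h, hv, mul_zero]
        · rw [zero_smul])
      have h10 := this (⟨0, hn⟩, 0)
      simp at h10
    refine ⟨hv0, ?_⟩
    rintro ⟨w, hw, hw0, huw⟩
    obtain ⟨b, hbd, hbα⟩ := mem_Wm.1 hw
    obtain ⟨a, had, haα⟩ := mem_Wm.1 huw
    have hrel : aeval α a * v 0 + aeval α (-b) * v 1 = 0 := by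
      rw [haα, map_neg, hbα]
      field_simp
      ring
    have hbd' : (-b).degree < (n : ℕ) := by rwa [Polynomial.degree_neg]
    have := hli (fun p => if p.2 = 0 then a.coeff (p.1 : ℕ) else (-b).coeff (p.1 : ℕ)) (by
      have hsum : ∑ p : Fin n × Fin 2,
          (if p.2 = 0 then a.coeff (p.1 : ℕ) else (-b).coeff (p.1 : ℕ)) • (α ^ (p.1 : ℕ) * v p.2)
          = aeval α a * v 0 + aeval α (-b) * v 1 := by
        rw [sum_split]
        congr 1
        · congr 1
          rw [aeval_eq_sum_fin hn had]
          exact Finset.sum_congr rfl fun i _ => by norm_num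
        · congr 1
          rw [aeval_eq_sum_fin hn hbd']
          exact Finset.sum_congr rfl fun i _ => by norm_num
      rw [hsum, hrel])
    have hbz : b = 0 := by
      ext i
      by_cases hi : i < n
      · have h2 := this (⟨i, hi⟩, 1)
        simp only [Fin.isValue, Polynomial.coeff_neg, neg_eq_zero,
          if_neg (by decide : ¬ (1 : Fin 2) = (0 : Fin 2))] at h2
        rw [Polynomial.coeff_zero]
        exact h2
      · rw [Polynomial.coeff_eq_zero_of_degree_lt
          (lt_of_lt_of_le hbd (by exact_mod_cast Nat.not_lt.1 hi)), Polynomial.coeff_zero]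
    exact hw0 (by rw [← hbα, hbz, map_zero])
  · rintro ⟨hv0, hnot⟩ g hg
    set a := polyOf (fun i => g (i, 0)) with ha
    set b := polyOf (fun i => g (i, 1)) with hb
    have hrel : aeval α a * v 0 + aeval α b * v 1 = 0 := by
      rw [ha, hb, aeval_polyOf, aeval_polyOf, ← sum_split, hg]
    have hbα : aeval α b = 0 := by
      by_contra hbne
      apply hnot
      refine ⟨aeval α b, mem_Wm.2 ⟨b, by rw [hb]; exact polyOf_degree _, rfl⟩, hbne, ?_⟩
      have hkey : (v 1 * (v 0)⁻¹) * aeval α b = aeval α (-a) := by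
        rw [map_neg]
        have h2 : aeval α b * v 1 = -(aeval α a) * v 0 := by linear_combination hrel
        calc v 1 * (v 0)⁻¹ * aeval α b = (aeval α b * v 1) * (v 0)⁻¹ := by ring
          _ = (-(aeval α a) * v 0) * (v 0)⁻¹ := by rw [h2]
          _ = -(aeval α a) := by field_simp
      rw [hkey]
      refine mem_Wm.2 ⟨-a, ?_, rfl⟩
      rw [Polynomial.degree_neg, ha]
      exact polyOf_degree _
    have hbz : b = 0 := H b (lt_of_lt_of_le (polyOf_degree _) hNcast) hbα
    have haα : aeval α a = 0 := by
      have : aeval α a * v 0 = 0 := by rw [← hrel, hbα]; ring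
      exact (mul_eq_zero.1 this).resolve_right hv0
    have haz : a = 0 := H a (lt_of_lt_of_le (polyOf_degree _) hNcast) haα
    intro p
    obtain ⟨i, j⟩ := p
    fin_cases j
    · have := polyOf_coeff (fun i => g (i, 0)) i
      rw [← ha, haz, Polynomial.coeff_zero] at this
      exact this.symm
    · have := polyOf_coeff (fun i => g (i, 1)) i
      rw [← hb, hbz, Polynomial.coeff_zero] at this
      exact this.symm
lemma basis_iff_indep [FiniteDimensional F K] {α : K} {n : ℕ}
    (hK : Module.finrank F K = 2 * n) (hn : 0 < n) (v : Fin 2 → K) :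
    (∃ b : Module.Basis (Fin n × Fin 2) F K, ∀ p : Fin n × Fin 2, b p = α ^ (p.1 : ℕ) * v p.2)
      ↔ LinearIndependent F (fun p : Fin n × Fin 2 => α ^ (p.1 : ℕ) * v p.2) := by
  constructor
  · rintro ⟨b, hb⟩
    have hfun : (fun p : Fin n × Fin 2 => α ^ (p.1 : ℕ) * v p.2) = ⇑b := by
      funext p; rw [hb]
    rw [hfun]
    exact b.linearIndependent
  · intro hli
    have : Nonempty (Fin n × Fin 2) := ⟨(⟨0, hn⟩, 0)⟩
    have hcard : Fintype.card (Fin n × Fin 2) = Module.finrank F K := by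
      simp [hK, mul_comm]
    exact ⟨basisOfLinearIndependentOfCardEqFinrank hli hcard, fun p =>
      congrFun (coe_basisOfLinearIndependentOfCardEqFinrank hli hcard) p⟩

noncomputable def pairEquiv (P : K → Prop) :
    {v : Fin 2 → K // v 0 ≠ 0 ∧ P (v 1 * (v 0)⁻¹)} ≃ ({x : K // x ≠ 0} × {u : K // P u}) where
  toFun v := (⟨v.1 0, v.2.1⟩, ⟨v.1 1 * (v.1 0)⁻¹, v.2.2⟩)
  invFun x := ⟨![x.1.1, x.2.1 * x.1.1], by
    refine ⟨by simpa using x.1.2, ?_⟩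
    have h0 : x.1.1 ≠ 0 := x.1.2
    have heq : (![x.1.1, x.2.1 * x.1.1] 1) * (![x.1.1, x.2.1 * x.1.1] 0)⁻¹ = x.2.1 := by
      simp only [Matrix.cons_val_one, Matrix.head_cons, Matrix.cons_val_zero]
      field_simp
    rw [heq]
    exact x.2.2⟩
  left_inv := by
    rintro ⟨v, hv0, hP⟩
    apply Subtype.ext
    funext i
    fin_cases i
    · simp
    · simp only [Matrix.cons_val_one, Matrix.head_cons]
      show v 1 * (v 0)⁻¹ * v 0 = v 1
      field_simp
  right_inv := by
    rintro ⟨⟨x, hx⟩, ⟨u, hu⟩⟩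
    rw [Prod.ext_iff]
    constructor
    · apply Subtype.ext
      simp
    · apply Subtype.ext
      show (![x, u * x] 1) * (![x, u * x] 0)⁻¹ = u
      simp only [Matrix.cons_val_one, Matrix.head_cons, Matrix.cons_val_zero]
      field_simp

end Aux

/-- The number of pairs (v₁,v₂) such that
(v₁, v₂, αv₁, αv₂, ..., α^{n-1}v₁, α^{n-1}v₂) is an F_q-basis of F_{q^{2n}}
equals q^{2n-1}(q-1)(q^{2n}-1). -/
theorem stmt_6 (F : Type*) [Field F] [Fintype F] (q : ℕ) (hq : q = Fintype.card F)
    (n : ℕ) (hn : 0 < n)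
    (K : Type*) [Field K] [Algebra F K] [FiniteDimensional F K]
    (hK : Module.finrank F K = 2 * n)
    (f : Polynomial F) (hf : f.Monic) (hirr : Irreducible f)
    (hdeg : f.natDegree = 2 * n)
    (α : K) (hα : Polynomial.aeval α f = 0) :
    Nat.card {v : Fin 2 → K //
        ∃ b : Module.Basis (Fin n × Fin 2) F K,
          ∀ p : Fin n × Fin 2, b p = α ^ (p.1 : ℕ) * v p.2} =
      q ^ (2 * n - 1) * (q - 1) * (q ^ (2 * n) - 1) := by
  classical
  have hmin : minpoly F α = f := (minpoly.eq_of_irreducible_of_monic hirr hα hf).symm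
  have H : ∀ p : Polynomial F, p.degree < ((2 * n : ℕ) : ℕ) → aeval α p = 0 → p = 0 := by
    intro p hdp hev
    by_contra hne
    have hle := minpoly.degree_le_of_ne_zero F α hne hev
    rw [hmin, Polynomial.degree_eq_natDegree hf.ne_zero, hdeg] at hle
    exact absurd (lt_of_lt_of_le hdp hle) (lt_irrefl _)
  have : Finite K := Module.finite_of_finite F
  letI : Fintype K := Fintype.ofFinite K
  have hcardK : Fintype.card K = q ^ (2 * n) := by
    rw [hq, Module.card_eq_pow_finrank (K := F) (V := K), hK]
  have hq2 : 2 ≤ q := by rw [hq]; exact Fintype.one_lt_card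
  have hiff : ∀ v : Fin 2 → K,
      (∃ b : Module.Basis (Fin n × Fin 2) F K, ∀ p : Fin n × Fin 2, b p = α ^ (p.1 : ℕ) * v p.2)
      ↔ (v 0 ≠ 0 ∧ ¬ ∃ w ∈ Wm F α n, w ≠ 0 ∧ (v 1 * (v 0)⁻¹) * w ∈ Wm F α n) := by
    intro v
    rw [basis_iff_indep hK hn v, indep_iff H hn (by omega) v]
  rw [Nat.card_congr (Equiv.subtypeEquivRight hiff)]
  rw [Nat.card_congr (pairEquiv (fun u : K => ¬ ∃ w ∈ Wm F α n, w ≠ 0 ∧ u * w ∈ Wm F α n))]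
  rw [Nat.card_prod]
  have h1 : Nat.card {x : K // x ≠ 0} = q ^ (2 * n) - 1 := by
    rw [Nat.card_eq_fintype_card, Fintype.card_subtype_compl (p := fun x : K => x = 0),
      Fintype.card_subtype_eq, hcardK]
  have h2 : Nat.card {u : K // ¬ ∃ w ∈ Wm F α n, w ≠ 0 ∧ u * w ∈ Wm F α n}
      = q ^ (2 * n) - q ^ (2 * n - 1) := by
    rw [Nat.card_eq_fintype_card,
      Fintype.card_subtype_compl (p := fun u : K => ∃ w ∈ Wm F α n, w ≠ 0 ∧ u * w ∈ Wm F α n),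
      hcardK]
    congr 1
    rw [← Nat.card_eq_fintype_card]
    rw [card_T H hn le_rfl (by rw [hcardK, hq]), hq]
  rw [h1, h2]
  have hy : q ^ (2 * n) - q ^ (2 * n - 1) = q ^ (2 * n - 1) * (q - 1) := by
    rw [Nat.mul_sub, mul_one, ← pow_succ]
    congr 2
    omega
  rw [hy, mul_comm]
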